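/- If a digraph G contains two connected components A and B that are not isomorphic but are switching adjacent (B is isomorphic to a switching of A about one of its vertices), then G is reconstructible from its deck: any digraph H with the same deck as G is isomorphic to G. -/

import Mathlib

/-- A digraph on a vertex type `V`: a set of ordered pairs of vertices,
given by its adjacency relation. -/
structure Dgraph (V : Type*) where
  Adj : V → V → Prop

namespace Dgraph

variable {V W : Type*}

/-- Switching at a vertex `v`: every edge incident with `v` is reversed. -/
def switchV (G : Dgraph V) (v : V) : Dgraph V :=
  ⟨fun a b => ((a = v ∨ b = v) ∧ G.Adj b a) ∨ (¬(a = v ∨ b = v) ∧ G.Adj a b)⟩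

/-- Switching about a set `S`: every edge with exactly one endpoint in `S` is reversed. -/
def switchSet (G : Dgraph V) (S : Set V) : Dgraph V :=
  ⟨fun a b => (((a ∈ S) ↔ (b ∈ S)) ∧ G.Adj a b) ∨ (¬((a ∈ S) ↔ (b ∈ S)) ∧ G.Adj b a)⟩

/-- Relabelling of a digraph by a permutation: `(γ a, γ b)` is an edge of `G.relabel γ`
whenever `(a,b)` is an edge of `G`. -/
def relabel (G : Dgraph V) (γ : Equiv.Perm V) : Dgraph V :=
  ⟨fun a b => G.Adj (γ.symm a) (γ.symm b)⟩

/-- Isomorphism of digraphs (possibly on different vertex types). -/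
def DIso (G : Dgraph V) (H : Dgraph W) : Prop :=
  ∃ e : V ≃ W, ∀ a b, G.Adj a b ↔ H.Adj (e a) (e b)

/-- An oriented graph: a digraph with no loops and no pair of opposite edges. -/
def IsOriented (G : Dgraph V) : Prop := ∀ a b, G.Adj a b → ¬ G.Adj b a

/-- The underlying undirected (simple) graph of a digraph. -/
def underlying (G : Dgraph V) : SimpleGraph V where
  Adj a b := a ≠ b ∧ (G.Adj a b ∨ G.Adj b a)
  symm := ⟨fun a b ⟨h1, h2⟩ => ⟨h1.symm, h2.symm⟩⟩
  loopless := ⟨fun a ⟨h1, _⟩ => h1 rfl⟩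

/-- The vertex set of the connected component (of the underlying graph) containing `v`. -/
def compSet (G : Dgraph V) (v : V) : Set V := {x | (underlying G).Reachable v x}

/-- The induced subdigraph on a set of vertices. -/
def induce (G : Dgraph V) (S : Set V) : Dgraph S := ⟨fun a b => G.Adj a b⟩

/-- A digraph is switching-stable if each vertex switching is isomorphic to it. -/
def SwitchStable (G : Dgraph V) : Prop := ∀ v, DIso (G.switchV v) G

/-- Isomorphism as a setoid on digraphs with a fixed vertex type. -/
def isoSetoid (V : Type*) : Setoid (Dgraph V) where
  r := DIso
  iseqv := by
    refine ⟨fun G => ⟨Equiv.refl V, fun a b => Iff.rfl⟩, ?_, ?_⟩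
    · rintro G H ⟨e, h⟩
      exact ⟨e.symm, fun a b => by simpa using (h (e.symm a) (e.symm b)).symm⟩
    · rintro G H K ⟨e, h⟩ ⟨f, h2⟩
      exact ⟨e.trans f, fun a b => (h a b).trans (h2 _ _)⟩

/-- The switching deck: the multiset of isomorphism classes of vertex switchings. -/
def deck (G : Dgraph V) [Fintype V] : Multiset (Quotient (isoSetoid V)) :=
  Finset.univ.val.map fun v => Quotient.mk (isoSetoid V) (G.switchV v)

/-- The `t`-deck: the deck augmented by `t` copies of the isomorphism class of `G`. -/
def tdeck (G : Dgraph V) [Fintype V] (t : ℕ) : Multiset (Quotient (isoSetoid V)) :=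
  Multiset.replicate t (Quotient.mk (isoSetoid V) G) + G.deck

end Dgraph
namespace Dgraph

open Classical

variable {V W U : Type*}

theorem ext' {G H : Dgraph V} (h : ∀ a b, G.Adj a b ↔ H.Adj a b) : G = H := by
  cases G; cases H
  simp only [mk.injEq]
  funext a b
  exact propext (h a b)

theorem DIso.refl (G : Dgraph V) : DIso G G := ⟨Equiv.refl V, fun _ _ => Iff.rfl⟩

theorem DIso.symm {G : Dgraph V} {H : Dgraph W} (h : DIso G H) : DIso H G := by
  obtain ⟨e, he⟩ := h
  exact ⟨e.symm, fun a b => by simpa using (he (e.symm a) (e.symm b)).symm⟩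

theorem DIso.trans {G : Dgraph V} {H : Dgraph W} {K : Dgraph U}
    (h : DIso G H) (h' : DIso H K) : DIso G K := by
  obtain ⟨e, he⟩ := h; obtain ⟨f, hf⟩ := h'
  exact ⟨e.trans f, fun a b => (he a b).trans (hf _ _)⟩

theorem diso_switchV_of {G : Dgraph V} {H : Dgraph W} (e : V ≃ W)
    (he : ∀ a b, G.Adj a b ↔ H.Adj (e a) (e b)) (v : V) :
    DIso (G.switchV v) (H.switchV (e v)) := by
  refine ⟨e, fun a b => ?_⟩
  simp only [switchV, e.apply_eq_iff_eq]
  constructor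
  · rintro (⟨h1, h2⟩ | ⟨h1, h2⟩)
    · exact Or.inl ⟨h1, (he b a).mp h2⟩
    · exact Or.inr ⟨h1, (he a b).mp h2⟩
  · rintro (⟨h1, h2⟩ | ⟨h1, h2⟩)
    · exact Or.inl ⟨h1, (he b a).mpr h2⟩
    · exact Or.inr ⟨h1, (he a b).mpr h2⟩

theorem switchV_switchV (G : Dgraph V) (v : V) : (G.switchV v).switchV v = G := by
  apply ext'
  intro a b
  by_cases h : a = v ∨ b = v <;> simp [switchV, h] <;> tauto

theorem underlying_switchV (G : Dgraph V) (v : V) :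
    (G.switchV v).underlying = G.underlying := by
  ext a b
  by_cases h : a = v ∨ b = v <;>
    simp [underlying, switchV, h] <;> tauto

theorem compSet_switchV (G : Dgraph V) (v x : V) :
    (G.switchV v).compSet x = G.compSet x := by
  unfold compSet
  rw [underlying_switchV]

theorem mem_compSet_self (G : Dgraph V) (x : V) : x ∈ G.compSet x :=
  SimpleGraph.Reachable.refl x

theorem compSet_eq_of_mem {G : Dgraph V} {x y : V} (h : y ∈ G.compSet x) :
    G.compSet x = G.compSet y := by
  ext z
  exact ⟨fun hz => (SimpleGraph.Reachable.symm h).trans hz, fun hz => h.trans hz⟩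

theorem adj_compSet_eq {G : Dgraph V} {p q : V} (h : G.Adj p q) :
    G.compSet p = G.compSet q := by
  by_cases hpq : p = q
  · rw [hpq]
  · exact compSet_eq_of_mem (SimpleGraph.Adj.reachable ⟨hpq, Or.inl h⟩)

theorem reachable_map_aux {G : Dgraph V} {H : Dgraph W} (e : V ≃ W)
    (he : ∀ a b, G.Adj a b ↔ H.Adj (e a) (e b)) {x y : V}
    (h : G.underlying.Reachable x y) : H.underlying.Reachable (e x) (e y) := by
  let f : G.underlying →g H.underlying := by
    refine ⟨fun z => e z, ?_⟩
    intro a b hab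
    exact ⟨fun hc => hab.1 (e.injective hc), by rw [← he a b, ← he b a]; exact hab.2⟩
  exact SimpleGraph.Reachable.map f h

theorem reachable_map {G : Dgraph V} {H : Dgraph W} (e : V ≃ W)
    (he : ∀ a b, G.Adj a b ↔ H.Adj (e a) (e b)) {x y : V} :
    G.underlying.Reachable x y ↔ H.underlying.Reachable (e x) (e y) := by
  constructor
  · exact reachable_map_aux e he
  · intro h
    have he' : ∀ a b, H.Adj a b ↔ G.Adj (e.symm a) (e.symm b) := by
      intro a b
      rw [he (e.symm a) (e.symm b)]
      simp
    have := reachable_map_aux e.symm he' h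
    simpa using this

theorem diso_induce_compSet {G : Dgraph V} {H : Dgraph W} (e : V ≃ W)
    (he : ∀ a b, G.Adj a b ↔ H.Adj (e a) (e b)) (x : V) :
    DIso (G.induce (G.compSet x)) (H.induce (H.compSet (e x))) := by
  refine ⟨Equiv.subtypeEquiv e (fun y => reachable_map e he), fun a b => ?_⟩
  exact he a b

end Dgraph
namespace Dgraph

variable {V W U : Type*}

theorem mem_compSet_comm {P : Dgraph V} {x z : V} :
    x ∈ P.compSet z ↔ z ∈ P.compSet x :=
  ⟨fun h => h.symm, fun h => h.symm⟩

theorem diso_induce_of_seteq {P Q : Dgraph V} {S T : Set V} (hST : S = T)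
    (h : ∀ a b : V, a ∈ S → b ∈ S → (P.Adj a b ↔ Q.Adj a b)) :
    DIso (P.induce S) (Q.induce T) := by
  subst hST
  exact ⟨Equiv.refl _, fun a b => h a.1 b.1 a.2 b.2⟩

theorem diso_induce_switch_of_seteq {P Q : Dgraph V} {S T : Set V} (hST : S = T)
    (h : ∀ a b : V, a ∈ S → b ∈ S → (P.Adj a b ↔ Q.Adj a b)) (v : V)
    (hv : v ∈ S) (hv' : v ∈ T) :
    DIso ((P.induce S).switchV ⟨v, hv⟩) ((Q.induce T).switchV ⟨v, hv'⟩) := by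
  subst hST
  exact diso_switchV_of (Equiv.refl ↥S) (fun (a b : ↥S) => h a.1 b.1 a.2 b.2) ⟨v, hv⟩

theorem diso_near (P : Dgraph V) (z : V) {x : V} (hx : x ∈ P.compSet z) :
    DIso ((P.switchV z).induce ((P.switchV z).compSet x))
      ((P.induce (P.compSet z)).switchV ⟨z, mem_compSet_self P z⟩) := by
  have h1 : (P.switchV z).compSet x = P.compSet z := by
    rw [compSet_switchV]
    exact (compSet_eq_of_mem hx).symm
  have step1 : DIso ((P.switchV z).induce ((P.switchV z).compSet x))
      ((P.switchV z).induce (P.compSet z)) :=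
    diso_induce_of_seteq h1 (fun _ _ _ _ => Iff.rfl)
  refine step1.trans ⟨Equiv.refl _, fun a b => ?_⟩
  simp only [switchV, induce, Subtype.ext_iff, Equiv.refl_apply]

theorem diso_far (P : Dgraph V) (z : V) {x : V} (hx : x ∉ P.compSet z) :
    DIso ((P.switchV z).induce ((P.switchV z).compSet x)) (P.induce (P.compSet x)) := by
  refine diso_induce_of_seteq (compSet_switchV P z x) (fun a b ha hb => ?_)
  rw [compSet_switchV] at ha hb
  have hne : ∀ c : V, c ∈ P.compSet x → ¬ c = z := by
    intro c hc hcz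
    subst hcz
    exact hx (mem_compSet_comm.mp hc)
  simp [switchV, hne a ha, hne b hb]

open Classical in
/-- Indicator of `C ≅ X`. -/
noncomputable def delta {V' W' : Type*} (C : Dgraph V') (X : Dgraph W') : ℕ :=
  if DIso C X then 1 else 0

theorem delta_congr {V' V'' W' : Type*} {C : Dgraph V'} {C' : Dgraph V''} (X : Dgraph W')
    (h : DIso C C') : delta C X = delta C' X := by
  unfold delta
  by_cases hx : DIso C' X
  · rw [if_pos hx, if_pos (h.trans hx)]
  · rw [if_neg hx, if_neg (fun hc => hx (h.symm.trans hc))]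

theorem delta_le_one {V' W' : Type*} (C : Dgraph V') (X : Dgraph W') : delta C X ≤ 1 := by
  unfold delta; split <;> simp

theorem delta_eq_one_iff {V' W' : Type*} {C : Dgraph V'} {X : Dgraph W'} :
    delta C X = 1 ↔ DIso C X := by
  unfold delta; split <;> simp_all

/-- Number of vertices whose component (as induced digraph) is isomorphic to `X`. -/
noncomputable def cnt {W' : Type*} (X : Dgraph W') (P : Dgraph V) [Fintype V] : ℕ :=
  ∑ x : V, delta (P.induce (P.compSet x)) X

theorem cnt_congr {W' : Type*} (X : Dgraph W') {V₂ : Type*} [Fintype V] [Fintype V₂]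
    {P : Dgraph V} {Q : Dgraph V₂} (h : DIso P Q) : cnt X P = cnt X Q := by
  obtain ⟨e, he⟩ := h
  exact Fintype.sum_equiv e _ _ fun x => delta_congr X (diso_induce_compSet e he x)

theorem card_filter_mem [Fintype V] (S : Set V) [DecidablePred (· ∈ S)] :
    (Finset.univ.filter (· ∈ S)).card = Nat.card S := by
  rw [Nat.card_eq_fintype_card, Fintype.card_subtype]

theorem diso_card {V' W' : Type*} {C : Dgraph V'} {X : Dgraph W'} (h : DIso C X) :
    Nat.card V' = Nat.card W' := by
  obtain ⟨e, _⟩ := h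
  exact Nat.card_congr e

theorem cnt_switchV {W' : Type*} (X : Dgraph W') (P : Dgraph V) [Fintype V] (z : V) :
    cnt X (P.switchV z) + Nat.card (P.compSet z) * delta (P.induce (P.compSet z)) X
      = cnt X P
        + Nat.card (P.compSet z)
          * delta ((P.induce (P.compSet z)).switchV ⟨z, mem_compSet_self P z⟩) X := by
  classical
  set S := P.compSet z with hS
  have key : ∀ (Q : Dgraph V) (g : ℕ),
      (∀ x : V, x ∈ S → delta (Q.induce (Q.compSet x)) X = g) →
      (∀ x : V, x ∉ S → delta (Q.induce (Q.compSet x)) X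
        = delta (P.induce (P.compSet x)) X) →
      cnt X Q = Nat.card S * g
        + ∑ x ∈ Finset.univ.filter (fun x => x ∉ S), delta (P.induce (P.compSet x)) X := by
    intro Q g hin hout
    rw [cnt, ← Finset.sum_filter_add_sum_filter_not Finset.univ (fun x => x ∈ S)]
    congr 1
    · rw [Finset.sum_congr rfl (fun x hx => hin x (by simpa using hx)), Finset.sum_const,
        smul_eq_mul, ← card_filter_mem]
    · exact Finset.sum_congr rfl (fun x hx => hout x (by simpa using hx))
  have h1 := key (P.switchV z)
    (delta ((P.induce S).switchV ⟨z, mem_compSet_self P z⟩) X)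
    (fun x hx => delta_congr X (diso_near P z hx))
    (fun x hx => delta_congr X (diso_far P z hx))
  have h2 := key P (delta (P.induce S) X)
    (fun x hx => delta_congr X
      (diso_induce_of_seteq (compSet_eq_of_mem hx).symm (fun _ _ _ _ => Iff.rfl)))
    (fun _ _ => rfl)
  rw [h1, h2]
  ring

end Dgraph

namespace Dgraph
variable {V : Type*}

theorem delta_eq_zero_of_not {V' W' : Type*} {C : Dgraph V'} {X : Dgraph W'}
    (h : ¬ DIso C X) : delta C X = 0 := by
  unfold delta
  rw [if_neg h]

theorem switchV_adj_of_ne {G : Dgraph V} {v p q : V} (hp : p ≠ v) (hq : q ≠ v) :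
    (G.switchV v).Adj p q ↔ G.Adj p q := by
  simp [switchV, hp, hq]

end Dgraph
namespace Dgraph

variable {V W U : Type*}

theorem adj_mem_compSet {G : Dgraph V} {p q : V} (h : G.Adj p q) : q ∈ G.compSet p := by
  rw [adj_compSet_eq h]
  exact mem_compSet_self G q

theorem compSet_eq_of_underlying {K G : Dgraph V} (hU : K.underlying = G.underlying)
    (p : V) : K.compSet p = G.compSet p := by
  unfold compSet
  rw [hU]

/-- Glue an isomorphism on one component with the identity outside. -/
theorem diso_of_component_iso_one {K G : Dgraph V} (hU : K.underlying = G.underlying)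
    (z : V)
    (hout : ∀ p q, p ∉ G.compSet z → q ∉ G.compSet z → (K.Adj p q ↔ G.Adj p q))
    (hin : DIso (K.induce (G.compSet z)) (G.induce (G.compSet z))) : DIso K G := by
  classical
  set S := G.compSet z with hSdef
  obtain ⟨e₂, he₂⟩ := hin
  have hKmem : ∀ p q, K.Adj p q → q ∈ G.compSet p := by
    intro p q h
    rw [← compSet_eq_of_underlying hU]
    exact adj_mem_compSet h
  have hSmem : ∀ p q : V, p ∈ S → q ∈ G.compSet p → q ∈ S := by
    intro p q hp hq
    rw [hSdef, compSet_eq_of_mem hp]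
    exact hq
  refine ⟨⟨fun p => if hp : p ∈ S then (e₂ ⟨p, hp⟩).1 else p,
    fun q => if hq : q ∈ S then (e₂.symm ⟨q, hq⟩).1 else q, ?_, ?_⟩, ?_⟩
  · intro p
    by_cases hp : p ∈ S
    · simp only [dif_pos hp, dif_pos (e₂ ⟨p, hp⟩).2, Subtype.coe_eta, Equiv.symm_apply_apply]
    · simp only [dif_neg hp]
  · intro q
    by_cases hq : q ∈ S
    · simp only [dif_pos hq, dif_pos (e₂.symm ⟨q, hq⟩).2, Subtype.coe_eta,
        Equiv.apply_symm_apply]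
    · simp only [dif_neg hq]
  · intro p q
    simp only [Equiv.coe_fn_mk]
    by_cases hp : p ∈ S <;> by_cases hq : q ∈ S
    · rw [dif_pos hp, dif_pos hq]
      exact he₂ ⟨p, hp⟩ ⟨q, hq⟩
    · rw [dif_pos hp, dif_neg hq]
      constructor
      · intro h
        exact absurd (hSmem p q hp (hKmem p q h)) hq
      · intro h
        have : q ∈ S := hSmem _ _ (e₂ ⟨p, hp⟩).2 (adj_mem_compSet h)
        exact absurd this hq
    · rw [dif_neg hp, dif_pos hq]
      constructor
      · intro h
        have hqp : p ∈ G.compSet q := mem_compSet_comm.mp (hKmem p q h)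
        exact absurd (hSmem q p hq hqp) hp
      · intro h
        have : p ∈ S := hSmem _ _ (e₂ ⟨q, hq⟩).2 (mem_compSet_comm.mp (adj_mem_compSet h))
        exact absurd this hp
    · rw [dif_neg hp, dif_neg hq]
      exact hout p q hp hq

/-- Glue isomorphisms swapping two components with the identity outside. -/
theorem diso_of_component_swap {K G : Dgraph V} (hU : K.underlying = G.underlying)
    {S T : Set V} (hS : ∀ p ∈ S, G.compSet p = S) (hT : ∀ p ∈ T, G.compSet p = T)
    (hd : ∀ p, p ∈ S → p ∉ T)
    (hout : ∀ p q, p ∉ S → p ∉ T → q ∉ S → q ∉ T → (K.Adj p q ↔ G.Adj p q))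
    (h1 : DIso (K.induce S) (G.induce T)) (h2 : DIso (K.induce T) (G.induce S)) :
    DIso K G := by
  classical
  obtain ⟨e₁, he₁⟩ := h1
  obtain ⟨e₂, he₂⟩ := h2
  have hd' : ∀ p, p ∈ T → p ∉ S := fun p hp hs => hd p hs hp
  have hKmem : ∀ p q, K.Adj p q → q ∈ G.compSet p := by
    intro p q h
    rw [← compSet_eq_of_underlying hU]
    exact adj_mem_compSet h
  have regK : ∀ p q, K.Adj p q → ((p ∈ S ↔ q ∈ S) ∧ (p ∈ T ↔ q ∈ T)) := by
    intro p q h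
    have h1 := hKmem p q h
    have h2 := mem_compSet_comm.mp h1
    constructor
    · exact ⟨fun hp => (hS p hp) ▸ h1, fun hq => (hS q hq) ▸ h2⟩
    · exact ⟨fun hp => (hT p hp) ▸ h1, fun hq => (hT q hq) ▸ h2⟩
  have regG : ∀ p q, G.Adj p q → ((p ∈ S ↔ q ∈ S) ∧ (p ∈ T ↔ q ∈ T)) := by
    intro p q h
    have h1 := adj_mem_compSet h
    have h2 := mem_compSet_comm.mp h1
    constructor
    · exact ⟨fun hp => (hS p hp) ▸ h1, fun hq => (hS q hq) ▸ h2⟩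
    · exact ⟨fun hp => (hT p hp) ▸ h1, fun hq => (hT q hq) ▸ h2⟩
  refine ⟨⟨fun p => if hp : p ∈ S then (e₁ ⟨p, hp⟩).1
      else if hp : p ∈ T then (e₂ ⟨p, hp⟩).1 else p,
    fun q => if hq : q ∈ T then (e₁.symm ⟨q, hq⟩).1
      else if hq : q ∈ S then (e₂.symm ⟨q, hq⟩).1 else q, ?_, ?_⟩, ?_⟩
  · intro p
    by_cases hp : p ∈ S
    · simp only [dif_pos hp, dif_pos (e₁ ⟨p, hp⟩).2, Subtype.coe_eta, Equiv.symm_apply_apply]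
    · by_cases hp' : p ∈ T
      · simp only [dif_neg hp, dif_pos hp', dif_neg (hd _ (e₂ ⟨p, hp'⟩).2),
          dif_pos (e₂ ⟨p, hp'⟩).2, Subtype.coe_eta, Equiv.symm_apply_apply]
      · simp only [dif_neg hp, dif_neg hp']
  · intro q
    by_cases hq : q ∈ T
    · simp only [dif_pos hq, dif_pos (e₁.symm ⟨q, hq⟩).2, Subtype.coe_eta,
        Equiv.apply_symm_apply]
    · by_cases hq' : q ∈ S
      · simp only [dif_neg hq, dif_pos hq', dif_neg (hd' _ (e₂.symm ⟨q, hq'⟩).2),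
          dif_pos (e₂.symm ⟨q, hq'⟩).2, Subtype.coe_eta, Equiv.apply_symm_apply]
      · simp only [dif_neg hq, dif_neg hq']
  · intro p q
    simp only [Equiv.coe_fn_mk]
    by_cases hpS : p ∈ S <;> by_cases hqS : q ∈ S
    · rw [dif_pos hpS, dif_pos hqS]
      exact he₁ ⟨p, hpS⟩ ⟨q, hqS⟩
    · rw [dif_pos hpS]
      refine iff_of_false (fun h => hqS ((regK p q h).1.mp hpS)) ?_
      intro h
      have hpT : (e₁ ⟨p, hpS⟩).1 ∈ T := (e₁ ⟨p, hpS⟩).2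
      by_cases hqT : q ∈ T
      · rw [dif_neg hqS, dif_pos hqT] at h
        have : (e₂ ⟨q, hqT⟩).1 ∈ T := ((regG _ _ h).2.mp hpT)
        exact hd _ (e₂ ⟨q, hqT⟩).2 this
      · rw [dif_neg hqS, dif_neg hqT] at h
        exact hqT ((regG _ _ h).2.mp hpT)
    · rw [dif_pos hqS]
      refine iff_of_false (fun h => hpS ((regK p q h).1.mpr hqS)) ?_
      intro h
      have hqT : (e₁ ⟨q, hqS⟩).1 ∈ T := (e₁ ⟨q, hqS⟩).2
      by_cases hpT : p ∈ T
      · rw [dif_neg hpS, dif_pos hpT] at h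
        have : (e₂ ⟨p, hpT⟩).1 ∈ T := ((regG _ _ h).2.mpr hqT)
        exact hd _ (e₂ ⟨p, hpT⟩).2 this
      · rw [dif_neg hpS, dif_neg hpT] at h
        exact hpT ((regG _ _ h).2.mpr hqT)
    · rw [dif_neg hpS, dif_neg hqS]
      by_cases hpT : p ∈ T <;> by_cases hqT : q ∈ T
      · rw [dif_pos hpT, dif_pos hqT]
        exact he₂ ⟨p, hpT⟩ ⟨q, hqT⟩
      · rw [dif_pos hpT, dif_neg hqT]
        refine iff_of_false (fun h => hqT ((regK p q h).2.mp hpT)) ?_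
        intro h
        have hpS' : (e₂ ⟨p, hpT⟩).1 ∈ S := (e₂ ⟨p, hpT⟩).2
        exact hqS ((regG _ _ h).1.mp hpS')
      · rw [dif_neg hpT, dif_pos hqT]
        refine iff_of_false (fun h => hpT ((regK p q h).2.mpr hqT)) ?_
        intro h
        have hqS' : (e₂ ⟨q, hqT⟩).1 ∈ S := (e₂ ⟨q, hqT⟩).2
        exact hpS ((regG _ _ h).1.mpr hqS')
      · rw [dif_neg hpT, dif_neg hqT]
        exact hout p q hpS hpT hqS hqT

end Dgraph
open Dgraph in
/-- If a digraph contains two non-isomorphic switching adjacent components, then it is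
reconstructible from its deck. -/
theorem reconstructible_of_switching_adjacent {V : Type*} [Fintype V] (G : Dgraph V)
    (u w : V) (hdiff : ¬ G.underlying.Reachable u w)
    (hniso : ¬ DIso (G.induce (G.compSet u)) (G.induce (G.compSet w)))
    (hadj : ∃ a : G.compSet u,
      DIso ((G.induce (G.compSet u)).switchV a) (G.induce (G.compSet w))) :
    ∀ H : Dgraph V, H.deck = G.deck → DIso H G := by
  classical
  obtain ⟨a, hA⟩ := hadj
  intro H hdeck
  -- abbreviations
  have ha' : (a : V) ∈ G.compSet u := a.2
  have hcompa : G.compSet (a : V) = G.compSet u := (compSet_eq_of_mem a.2).symm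
  -- the special vertex in the B-component
  obtain ⟨e₀, he₀⟩ := hA
  have hA' : DIso ((G.induce (G.compSet u)).switchV a) (G.induce (G.compSet w)) := ⟨e₀, he₀⟩
  have hB : DIso ((G.induce (G.compSet w)).switchV (e₀ a)) (G.induce (G.compSet u)) := by
    have h1 := diso_switchV_of e₀ he₀ a
    rw [switchV_switchV] at h1
    exact h1.symm
  set b : ↥(G.compSet w) := e₀ a with hbdef
  have hb' : (b : V) ∈ G.compSet w := b.2
  have hcompb : G.compSet (b : V) = G.compSet w := (compSet_eq_of_mem b.2).symm
  -- sizes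
  have hsAB : Nat.card ↥(G.compSet u) = Nat.card ↥(G.compSet w) := by
    obtain ⟨e, -⟩ := hA'
    exact Nat.card_congr e
  have hspos : 0 < Nat.card ↥(G.compSet u) := by
    have : Nonempty ↥(G.compSet u) := ⟨⟨u, mem_compSet_self G u⟩⟩
    exact Nat.card_pos
  -- get z from the deck for the card at a
  have getz : ∀ v : V, ∃ z : V, DIso H ((G.switchV v).switchV z) := by
    intro v
    have hmem : Quotient.mk (isoSetoid V) (G.switchV v) ∈ H.deck := by
      rw [hdeck]
      exact Multiset.mem_map.mpr ⟨v, Finset.mem_univ_val v, rfl⟩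
    obtain ⟨x, -, hxq⟩ := Multiset.mem_map.mp hmem
    have hx : DIso (H.switchV x) (G.switchV v) := Quotient.exact hxq
    obtain ⟨ex, hex⟩ := hx
    refine ⟨ex x, ?_⟩
    have h2 := diso_switchV_of ex hex x
    rw [switchV_switchV] at h2
    exact h2
  obtain ⟨z, hKH⟩ := getz (a : V)
  obtain ⟨z', hK'H⟩ := getz (b : V)
  set K : Dgraph V := (G.switchV (a : V)).switchV z with hKdef
  set K' : Dgraph V := (G.switchV (b : V)).switchV z' with hK'def
  have hKK' : DIso K K' := hKH.symm.trans hK'H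
  -- component transports at a and b
  have LAa : DIso (G.induce (G.compSet (a : V))) (G.induce (G.compSet u)) :=
    diso_induce_of_seteq hcompa (fun _ _ _ _ => Iff.rfl)
  have LAa' : DIso ((G.induce (G.compSet (a : V))).switchV ⟨(a : V), mem_compSet_self G _⟩)
      ((G.induce (G.compSet u)).switchV a) :=
    diso_induce_switch_of_seteq hcompa (fun _ _ _ _ => Iff.rfl) (a : V)
      (mem_compSet_self G _) a.2
  have LBb : DIso (G.induce (G.compSet (b : V))) (G.induce (G.compSet w)) :=
    diso_induce_of_seteq hcompb (fun _ _ _ _ => Iff.rfl)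
  have LBb' : DIso ((G.induce (G.compSet (b : V))).switchV ⟨(b : V), mem_compSet_self G _⟩)
      ((G.induce (G.compSet w)).switchV b) :=
    diso_induce_switch_of_seteq hcompb (fun _ _ _ _ => Iff.rfl) (b : V)
      (mem_compSet_self G _) b.2
  have hcard_a : Nat.card ↥(G.compSet (a : V)) = Nat.card ↥(G.compSet u) := by
    rw [hcompa]
  have hcard_b : Nat.card ↥(G.compSet (b : V)) = Nat.card ↥(G.compSet w) := by
    rw [hcompb]
  -- the two perturbed components
  set Da : Dgraph ↥((G.switchV (a : V)).compSet z) :=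
    (G.switchV (a : V)).induce ((G.switchV (a : V)).compSet z) with hDadef
  set Db : Dgraph ↥((G.switchV (b : V)).compSet z') :=
    (G.switchV (b : V)).induce ((G.switchV (b : V)).compSet z') with hDbdef
  set s : ℕ := Nat.card ↥(G.compSet u) with hsdef
  set cz : ℕ := Nat.card ↥((G.switchV (a : V)).compSet z) with hczdef
  set cz' : ℕ := Nat.card ↥((G.switchV (b : V)).compSet z') with hcz'def
  -- master counting identities
  have F1 : ∀ (S : Set V) (X : Dgraph ↥S),
      cnt X K + cz * delta Da X + s * delta (G.induce (G.compSet u)) X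
        = cnt X G + s * delta (G.induce (G.compSet w)) X
          + cz * delta (Da.switchV ⟨z, mem_compSet_self _ z⟩) X := by
    intro S X
    have h1 := cnt_switchV X G (a : V)
    have h2 := cnt_switchV X (G.switchV (a : V)) z
    rw [delta_congr X LAa, delta_congr X (LAa'.trans hA'), hcard_a] at h1
    rw [← hKdef, ← hDadef, ← hczdef] at h2
    omega
  have F2 : ∀ (S : Set V) (X : Dgraph ↥S),
      cnt X K' + cz' * delta Db X + s * delta (G.induce (G.compSet w)) X
        = cnt X G + s * delta (G.induce (G.compSet u)) X
          + cz' * delta (Db.switchV ⟨z', mem_compSet_self _ z'⟩) X := by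
    intro S X
    have h1 := cnt_switchV X G (b : V)
    have h2 := cnt_switchV X (G.switchV (b : V)) z'
    rw [delta_congr X LBb, delta_congr X (LBb'.trans hB), hcard_b, ← hsAB] at h1
    rw [← hK'def, ← hDbdef, ← hcz'def] at h2
    omega
  have hcntKK' : ∀ (S : Set V) (X : Dgraph ↥S), cnt X K = cnt X K' :=
    fun S X => cnt_congr X hKK'
  -- instantiate at X = component of u
  have h1 : DIso (Da.switchV ⟨z, mem_compSet_self _ z⟩) (G.induce (G.compSet u)) := by
    by_contra hcon
    have f1 := F1 _ (G.induce (G.compSet u))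
    have f2 := F2 _ (G.induce (G.compSet u))
    rw [hcntKK' _ _] at f1
    rw [delta_eq_one_iff.mpr (DIso.refl _)] at f1 f2
    rw [delta_eq_zero_of_not (fun hc => hniso hc.symm)] at f1 f2
    rw [delta_eq_zero_of_not hcon] at f1
    -- f1 : cnt K' + cz * delta Da + s * 1 = cnt G + s * 0 + cz * 0
    -- f2 : cnt K' + cz' * delta Db + s * 0 = cnt G + s * 1 + cz' * delta Db_{z'}
    have hq0 : delta Db (G.induce (G.compSet u)) = 0 ∨ delta Db (G.induce (G.compSet u)) = 1 := by
      have := delta_le_one Db (G.induce (G.compSet u))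
      omega
    rcases hq0 with hq | hq
    · rw [hq] at f2
      omega
    · have hcz' : cz' = s := by
        rw [hcz'def, hsdef]
        exact diso_card (delta_eq_one_iff.mp hq)
      rw [hq, hcz'] at f2
      omega
  have h2 : DIso Da (G.induce (G.compSet w)) := by
    by_contra hcon
    have f1 := F1 _ (G.induce (G.compSet w))
    have f2 := F2 _ (G.induce (G.compSet w))
    rw [hcntKK' _ _] at f1
    rw [delta_eq_one_iff.mpr (DIso.refl _)] at f1 f2
    rw [delta_eq_zero_of_not hniso] at f1 f2
    rw [delta_eq_zero_of_not hcon] at f1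
    -- f1 : cnt K' + cz * 0 + s * 0 = cnt G + s * 1 + cz * delta Da_z
    -- f2 : cnt K' + cz' * delta Db + s * 1 = cnt G + s * 0 + cz' * delta Db_{z'}
    have hq0 : delta (Db.switchV ⟨z', mem_compSet_self _ z'⟩) (G.induce (G.compSet w)) = 0 ∨
        delta (Db.switchV ⟨z', mem_compSet_self _ z'⟩) (G.induce (G.compSet w)) = 1 := by
      have := delta_le_one (Db.switchV ⟨z', mem_compSet_self _ z'⟩) (G.induce (G.compSet w))
      omega
    rcases hq0 with hq | hq
    · rw [hq] at f2
      omega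
    · have hcz' : cz' = s := by
        have h := diso_card (delta_eq_one_iff.mp hq)
        omega
      rw [hq, hcz'] at f2
      omega
  -- now glue
  have hUK : K.underlying = G.underlying := by
    rw [hKdef, underlying_switchV, underlying_switchV]
  have hcompK : ∀ p, K.compSet p = G.compSet p := compSet_eq_of_underlying hUK
  have hcompKa : (G.switchV (a : V)).compSet z = G.compSet z := compSet_switchV G _ z
  refine hKH.trans ?_
  by_cases hz : z ∈ G.compSet u
  · -- z in the same component as a : one-component gluing
    have hCz : G.compSet z = G.compSet u := (compSet_eq_of_mem hz).symm
    have ha'' : (a : V) ∈ G.compSet z := by rw [hCz]; exact ha'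
    apply diso_of_component_iso_one hUK z
    · intro p q hp hq
      have hpz : p ≠ z := fun hc => hp (hc ▸ mem_compSet_self G z)
      have hqz : q ≠ z := fun hc => hq (hc ▸ mem_compSet_self G z)
      have hpa : p ≠ (a : V) := fun hc => hp (hc ▸ ha'')
      have hqa : q ≠ (a : V) := fun hc => hq (hc ▸ ha'')
      rw [hKdef]
      rw [switchV_adj_of_ne hpz hqz, switchV_adj_of_ne hpa hqa]
    · -- DIso (K.induce (G.compSet z)) (G.induce (G.compSet z))
      have s1 : DIso (K.induce (G.compSet z)) (K.induce (K.compSet z)) :=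
        diso_induce_of_seteq (hcompK z).symm (fun _ _ _ _ => Iff.rfl)
      have s2 : DIso (K.induce (K.compSet z)) (Da.switchV ⟨z, mem_compSet_self _ z⟩) :=
        diso_near (G.switchV (a : V)) z (mem_compSet_self _ z)
      have s3 : DIso (G.induce (G.compSet u)) (G.induce (G.compSet z)) :=
        diso_induce_of_seteq hCz.symm (fun _ _ _ _ => Iff.rfl)
      exact s1.trans (s2.trans (h1.trans s3))
  · -- z in a different component : swap gluing
    have hd : ∀ p, p ∈ G.compSet u → p ∉ G.compSet z := by
      intro p hp hpz
      have h1' : G.compSet u = G.compSet p := compSet_eq_of_mem hp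
      have h2' : G.compSet z = G.compSet p := compSet_eq_of_mem hpz
      exact hz ((h1'.trans h2'.symm) ▸ mem_compSet_self G z)
    have hza : z ∉ G.compSet (a : V) := by rw [hcompa]; exact hz
    have haz : (a : V) ∉ G.compSet z := fun hc => hd (a : V) ha' hc
    apply diso_of_component_swap hUK
      (S := G.compSet u) (T := G.compSet z)
      (fun p hp => (compSet_eq_of_mem hp).symm)
      (fun p hp => (compSet_eq_of_mem hp).symm)
      hd
    · -- outside both components
      intro p q hpS hpT hqS hqT
      have hpz : p ≠ z := fun hc => hpT (hc ▸ mem_compSet_self G z)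
      have hqz : q ≠ z := fun hc => hqT (hc ▸ mem_compSet_self G z)
      have hpa : p ≠ (a : V) := fun hc => hpS (hc ▸ ha')
      have hqa : q ≠ (a : V) := fun hc => hqS (hc ▸ ha')
      rw [hKdef]
      rw [switchV_adj_of_ne hpz hqz, switchV_adj_of_ne hpa hqa]
    · -- DIso (K.induce (G.compSet u)) (G.induce (G.compSet z))
      have s1 : DIso (K.induce (G.compSet u)) (K.induce (K.compSet (a : V))) :=
        diso_induce_of_seteq (by rw [hcompK, hcompa]) (fun _ _ _ _ => Iff.rfl)
      have s2 : DIso (K.induce (K.compSet (a : V)))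
          ((G.switchV (a : V)).induce ((G.switchV (a : V)).compSet (a : V))) :=
        diso_far (G.switchV (a : V)) z (by rw [compSet_switchV]; exact haz)
      have s3 : DIso ((G.switchV (a : V)).induce ((G.switchV (a : V)).compSet (a : V)))
          ((G.induce (G.compSet (a : V))).switchV ⟨(a : V), mem_compSet_self G _⟩) :=
        diso_near G (a : V) (mem_compSet_self G _)
      have s4 : DIso ((G.induce (G.compSet (a : V))).switchV ⟨(a : V), mem_compSet_self G _⟩)
          (G.induce (G.compSet w)) := LAa'.trans hA'
      have s5 : DIso (G.induce (G.compSet w)) Da := h2.symm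
      have s6 : DIso Da (G.induce (G.compSet z)) := by
        have := diso_far G (a : V) (x := z) hza
        rw [hDadef]
        exact this
      exact s1.trans (s2.trans (s3.trans (s4.trans (s5.trans s6))))
    · -- DIso (K.induce (G.compSet z)) (G.induce (G.compSet u))
      have s1 : DIso (K.induce (G.compSet z)) (K.induce (K.compSet z)) :=
        diso_induce_of_seteq (hcompK z).symm (fun _ _ _ _ => Iff.rfl)
      have s2 : DIso (K.induce (K.compSet z)) (Da.switchV ⟨z, mem_compSet_self _ z⟩) :=
        diso_near (G.switchV (a : V)) z (mem_compSet_self _ z)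
      exact s1.trans (s2.trans h1)
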